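/- Let n ≥ 2, m ≥ 2 and write m = a·n + r with 1 ≤ r ≤ n. Define f(x) = a − (m−1) + x + x^2 + ... + x^{r−1} + a·(x + x^2 + ... + x^{n−1}). Then f(1) = 0, and for every n-th root of unity ξ ≠ 1 in ℂ, f(ξ) ≠ 0. -/

import Mathlib

lemma aux_icc_sum (x : ℂ) (k : ℕ) :
    ∑ i ∈ Finset.Icc 1 k, x ^ i = (∑ i ∈ Finset.range (k+1), x ^ i) - 1 := by
  rw [Finset.range_eq_Ico, Finset.sum_eq_sum_Ico_succ_bot (by omega)]
  rw [← Finset.Ico_add_one_right_eq_Icc]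
  ring

theorem stmt_12 (n m a r : ℕ) (hn : 2 ≤ n) (hm : 2 ≤ m)
    (hmar : m = a * n + r) (hr1 : 1 ≤ r) (hr2 : r ≤ n)
    (f : ℂ → ℂ)
    (hf : ∀ x : ℂ, f x = (a : ℂ) - ((m : ℂ) - 1) +
      (∑ i ∈ Finset.Icc 1 (r - 1), x ^ i) + (a : ℂ) * ∑ i ∈ Finset.Icc 1 (n - 1), x ^ i) :
    f 1 = 0 ∧ ∀ ξ : ℂ, ξ ^ n = 1 → ξ ≠ 1 → f ξ ≠ 0 := by
  have hr' : r - 1 + 1 = r := by omega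
  have hn' : n - 1 + 1 = n := by omega
  constructor
  · rw [hf]
    simp only [one_pow, Finset.sum_const, Nat.card_Icc, nsmul_eq_mul, mul_one]
    have : (↑(r - 1 + 1 - 1) : ℂ) = (r : ℂ) - 1 := by
      rw [hr']; push_cast [hr1]; ring
    have h2 : (↑(n - 1 + 1 - 1) : ℂ) = (n : ℂ) - 1 := by
      rw [hn']; push_cast [Nat.one_le_iff_ne_zero.mpr (by omega : n ≠ 0)]; ring
    rw [hr', hn'] at *
    have hm' : (m : ℂ) = a * n + r := by exact_mod_cast congrArg Nat.cast hmar
    rw [this, h2, hm']; ring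
  · intro ξ hξn hξ1 hzero
    rw [hf] at hzero
    have hgeom : ∑ i ∈ Finset.range n, ξ ^ i = 0 := by
      rw [geom_sum_eq hξ1, hξn]
      simp
    rw [aux_icc_sum, aux_icc_sum, hr', hn', hgeom] at hzero
    have hm' : (m : ℂ) = a * n + r := by exact_mod_cast congrArg Nat.cast hmar
    have hS : ∑ i ∈ Finset.range r, ξ ^ i = (m : ℂ) := by
      have : ∑ i ∈ Finset.range r, ξ ^ i - (m : ℂ) = 0 := by
        rw [← hzero]; ring
      linear_combination this
    -- norm of ξ is 1
    have hnorm : ‖ξ‖ = 1 := by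
      have h1 : ‖ξ‖ ^ n = 1 := by rw [← norm_pow, hξn, norm_one]
      exact (pow_left_inj₀ (norm_nonneg ξ) zero_le_one (by omega : n ≠ 0)).mp (by rw [h1, one_pow])
    have hre_le : ∀ i, (ξ ^ i).re ≤ 1 := by
      intro i
      calc (ξ ^ i).re ≤ ‖ξ ^ i‖ := Complex.re_le_norm _
        _ = 1 := by rw [norm_pow, hnorm, one_pow]
    have hre_sum : (∑ i ∈ Finset.range r, ξ ^ i).re = (m : ℝ) := by
      rw [hS]; simp
    rw [Complex.re_sum] at hre_sum
    rcases eq_or_lt_of_le hr1 with h1 | h1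
    · -- r = 1
      have : r = 1 := h1.symm
      subst this
      simp at hre_sum
      have : m = 1 := by exact_mod_cast hre_sum.symm
      omega
    · -- r ≥ 2 : strict inequality
      have hrelt : ξ.re < 1 := by
        rcases lt_or_eq_of_le (hre_le 1) with h | h
        · simpa using h
        · exfalso
          apply hξ1
          have him : ξ.im = 0 := by
            have hns : Complex.normSq ξ = 1 := by
              have h2 := hnorm
              rw [Complex.norm_def, Real.sqrt_eq_one] at h2
              exact h2
            have : ξ.re ^ 2 + ξ.im ^ 2 = 1 := by
              rw [← hns]; simp [Complex.normSq_apply]; ring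
            simp at h
            nlinarith
          apply Complex.ext <;> simp_all
      have hlt : ∑ i ∈ Finset.range r, (ξ ^ i).re < ∑ i ∈ Finset.range r, (1:ℝ) :=
        Finset.sum_lt_sum (fun i _ => hre_le i)
          ⟨1, Finset.mem_range.mpr h1, by simpa using hrelt⟩
      rw [hre_sum] at hlt
      simp at hlt
      omega
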